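/- Let K₁,…,K_m be nonnegative n×n matrices, α₁,…,α_m positive reals with ∑α_t = 1, and p ∈ ℕ, p ≥ 1. Then r(K₁^(α₁) ∘ ⋯ ∘ K_m^(α_m)) ≤ r((K₁^p)^(α₁) ∘ ⋯ ∘ (K_m^p)^(α_m))^{1/p} ≤ r(K₁)^{α₁} ⋯ r(K_m)^{α_m}, where A^(α) denotes the entrywise power and K^p the ordinary matrix power. -/

import Mathlib

open scoped ENNReal
open Finset
noncomputable def specRad {n : ℕ} (A : Matrix (Fin n) (Fin n) ℝ) : ℝ≥0∞ :=
  spectralRadius ℂ (A.map (algebraMap ℝ ℂ))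
noncomputable def opNorm {n : ℕ} (A : Matrix (Fin n) (Fin n) ℝ) : ℝ :=
  ‖Matrix.toEuclideanCLM (𝕜 := ℝ) A‖

open Filter
open scoped Topology NNReal Matrix.Norms.L2Operator

section Helpers

/-- Multi-factor weighted Hölder (AM-GM form) for finite sums. -/
lemma holder_sum {m : ℕ} (α : Fin m → ℝ) (hα : ∀ t, 0 < α t) (hsum : ∑ t, α t = 1)
    {ι : Type*} (s : Finset ι) (f : Fin m → ι → ℝ) (hf : ∀ t k, 0 ≤ f t k) :
    ∑ k ∈ s, ∏ t, (f t k) ^ (α t) ≤ ∏ t, (∑ k ∈ s, f t k) ^ (α t) := by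
  by_cases hz : ∃ t, ∑ k ∈ s, f t k = 0
  · obtain ⟨t0, ht0⟩ := hz
    have hfk : ∀ k ∈ s, f t0 k = 0 :=
      (Finset.sum_eq_zero_iff_of_nonneg (fun k _ => hf t0 k)).mp ht0
    have hL : ∑ k ∈ s, ∏ t, (f t k) ^ (α t) = 0 := by
      refine Finset.sum_eq_zero fun k hk => ?_
      refine Finset.prod_eq_zero (Finset.mem_univ t0) ?_
      rw [hfk k hk, Real.zero_rpow (ne_of_gt (hα t0))]
    rw [hL]
    exact Finset.prod_nonneg fun t _ =>
      Real.rpow_nonneg (Finset.sum_nonneg fun k _ => hf t k) _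
  · push_neg at hz
    have hS : ∀ t, 0 < ∑ k ∈ s, f t k := fun t =>
      lt_of_le_of_ne (Finset.sum_nonneg fun k _ => hf t k) (Ne.symm (hz t))
    set S : Fin m → ℝ := fun t => ∑ k ∈ s, f t k with hSdef
    have hP : (0:ℝ) < ∏ t, S t ^ α t :=
      Finset.prod_pos fun t _ => Real.rpow_pos_of_pos (hS t) _
    rw [← div_le_one hP, Finset.sum_div]
    have key : ∀ k ∈ s, (∏ t, f t k ^ α t) / (∏ t, S t ^ α t) ≤ ∑ t, α t * (f t k / S t) := by
      intro k hk
      have hq : (∏ t, f t k ^ α t) / (∏ t, S t ^ α t) = ∏ t, (f t k / S t) ^ α t := by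
        rw [← Finset.prod_div_distrib]
        exact Finset.prod_congr rfl fun t _ => (Real.div_rpow (hf t k) (hS t).le _).symm
      rw [hq]
      exact Real.geom_mean_le_arith_mean_weighted _ _ _ (fun t _ => (hα t).le)
        hsum (fun t _ => div_nonneg (hf t k) (hS t).le)
    calc ∑ k ∈ s, (∏ t, f t k ^ α t) / (∏ t, S t ^ α t)
        ≤ ∑ k ∈ s, ∑ t, α t * (f t k / S t) := Finset.sum_le_sum key
      _ = ∑ t, α t * (S t / S t) := by
          rw [Finset.sum_comm]
          refine Finset.sum_congr rfl fun t _ => ?_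
          rw [← Finset.mul_sum, ← Finset.sum_div]
      _ = 1 := by
          rw [← hsum]
          exact Finset.sum_congr rfl fun t _ => by rw [div_self (hS t).ne', mul_one]

variable {n : ℕ}

lemma entry_pow_nonneg {A : Matrix (Fin n) (Fin n) ℝ} (hA : ∀ i j, 0 ≤ A i j) (k : ℕ) :
    ∀ i j, 0 ≤ (A ^ k) i j := by
  induction k with
  | zero => intro i j; simp [Matrix.one_apply]; positivity
  | succ k ih =>
      intro i j
      rw [pow_succ, Matrix.mul_apply]
      exact Finset.sum_nonneg fun l _ => mul_nonneg (ih i l) (hA l j)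

lemma entry_pow_mono {A B : Matrix (Fin n) (Fin n) ℝ} (hA : ∀ i j, 0 ≤ A i j)
    (hAB : ∀ i j, A i j ≤ B i j) (k : ℕ) : ∀ i j, (A ^ k) i j ≤ (B ^ k) i j := by
  induction k with
  | zero => intro i j; simp
  | succ k ih =>
      intro i j
      rw [pow_succ, pow_succ, Matrix.mul_apply, Matrix.mul_apply]
      refine Finset.sum_le_sum fun l _ => mul_le_mul (ih i l) (hAB l j) (hA l j)
        (entry_pow_nonneg (fun i j => le_trans (hA i j) (hAB i j)) k i l)

/-- entrywise Hölder for matrix powers of a Hadamard weighted geometric mean -/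
lemma geom_pow_le {m : ℕ} (K : Fin m → Matrix (Fin n) (Fin n) ℝ)
    (hK : ∀ t i j, 0 ≤ K t i j) (α : Fin m → ℝ) (hα : ∀ t, 0 < α t)
    (hsum : ∑ t, α t = 1) (k : ℕ) :
    ∀ i j, ((Matrix.of fun i j => ∏ t, (K t i j) ^ (α t)) ^ k) i j
      ≤ ∏ t, ((K t ^ k) i j) ^ (α t) := by
  have hm : 0 < m := by
    by_contra h
    push_neg at h
    interval_cases m
    · simp at hsum
  induction k with
  | zero =>
      intro i j
      by_cases hij : i = j
      · subst hij; simp [Matrix.one_apply_eq]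
      · simp only [pow_zero, Matrix.one_apply_ne hij]
        rw [Finset.prod_eq_zero (Finset.mem_univ (⟨0, hm⟩ : Fin m))
          (Real.zero_rpow (ne_of_gt (hα _)))]
  | succ k ih =>
      intro i j
      rw [pow_succ, Matrix.mul_apply]
      calc ∑ l, ((Matrix.of fun i j => ∏ t, (K t i j) ^ (α t)) ^ k) i l *
            (Matrix.of fun i j => ∏ t, (K t i j) ^ (α t)) l j
          ≤ ∑ l, ∏ t, ((K t ^ k) i l * K t l j) ^ (α t) := by
            refine Finset.sum_le_sum fun l _ => ?_
            have h1 : (Matrix.of fun i j => ∏ t, (K t i j) ^ (α t)) l j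
                = ∏ t, (K t l j) ^ (α t) := rfl
            rw [h1]
            have h2 : ∀ t, ((K t ^ k) i l * K t l j) ^ (α t)
                = ((K t ^ k) i l) ^ (α t) * (K t l j) ^ (α t) := fun t =>
              Real.mul_rpow (entry_pow_nonneg (hK t) k i l) (hK t l j)
            rw [Finset.prod_congr rfl fun t _ => h2 t, Finset.prod_mul_distrib]
            refine mul_le_mul_of_nonneg_right (ih i l) ?_
            exact Finset.prod_nonneg fun t _ => Real.rpow_nonneg (hK t l j) _
        _ ≤ ∏ t, (∑ l, (K t ^ k) i l * K t l j) ^ (α t) := by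
            exact holder_sum α hα hsum Finset.univ
              (fun t l => (K t ^ k) i l * K t l j)
              (fun t l => mul_nonneg (entry_pow_nonneg (hK t) k i l) (hK t l j))
        _ = ∏ t, ((K t ^ (k+1)) i j) ^ (α t) := by
            refine Finset.prod_congr rfl fun t _ => ?_
            rw [pow_succ, Matrix.mul_apply]

lemma euclid_coord_le (y : EuclideanSpace ℂ (Fin n)) (i : Fin n) : ‖y i‖ ≤ ‖y‖ := by
  rw [EuclideanSpace.norm_eq]
  have h1 : ‖y i‖ = Real.sqrt (‖y i‖ ^ 2) := (Real.sqrt_sq (norm_nonneg _)).symm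
  rw [h1]
  apply Real.sqrt_le_sqrt
  exact Finset.single_le_sum (f := fun j => ‖y j‖ ^ 2)
    (fun j _ => sq_nonneg _) (Finset.mem_univ i)

lemma entry_le_l2_opNorm (B : Matrix (Fin n) (Fin n) ℂ) (i j : Fin n) : ‖B i j‖ ≤ ‖B‖ := by
  set x : EuclideanSpace ℂ (Fin n) := (EuclideanSpace.equiv (Fin n) ℂ).symm (Pi.single j 1)
    with hxdef
  set y : EuclideanSpace ℂ (Fin n) := (EuclideanSpace.equiv (Fin n) ℂ).symm (B.mulVec x)
    with hydef
  have hyi : y i = B i j := by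
    show (B.mulVec (Pi.single j 1)) i = B i j
    rw [Matrix.mulVec_single]
    exact mul_one _
  have hxn : ‖x‖ = 1 := by
    have : x = EuclideanSpace.single j 1 := rfl
    rw [this, EuclideanSpace.norm_single, norm_one]
  calc ‖B i j‖ = ‖y i‖ := by rw [hyi]
    _ ≤ ‖y‖ := euclid_coord_le y i
    _ ≤ ‖B‖ * ‖x‖ := B.l2_opNorm_mulVec x
    _ = ‖B‖ := by rw [hxn, mul_one]

lemma l2_opNorm_le_sum (B : Matrix (Fin n) (Fin n) ℂ) : ‖B‖ ≤ ∑ i, ∑ j, ‖B i j‖ := by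
  rw [Matrix.l2_opNorm_def]
  refine ContinuousLinearMap.opNorm_le_bound _
    (Finset.sum_nonneg fun i _ => Finset.sum_nonneg fun j _ => norm_nonneg _) fun x => ?_
  set T := (Matrix.toEuclideanLin.trans LinearMap.toContinuousLinearMap) B
  have hTx : ∀ i : Fin n, (T x : EuclideanSpace ℂ (Fin n)) i = ∑ j, B i j * x j := by
    intro i
    rfl
  have hbound : ∀ i : Fin n, ‖(T x : EuclideanSpace ℂ (Fin n)) i‖ ≤ (∑ j, ‖B i j‖) * ‖x‖ := by
    intro i
    rw [hTx i]
    calc ‖∑ j, B i j * x j‖ ≤ ∑ j, ‖B i j * x j‖ := norm_sum_le _ _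
      _ ≤ ∑ j, ‖B i j‖ * ‖x‖ := by
          refine Finset.sum_le_sum fun j _ => ?_
          rw [norm_mul]
          exact mul_le_mul_of_nonneg_left (euclid_coord_le x j) (norm_nonneg _)
      _ = (∑ j, ‖B i j‖) * ‖x‖ := by rw [Finset.sum_mul]
  calc ‖T x‖ = Real.sqrt (∑ i, ‖(T x : EuclideanSpace ℂ (Fin n)) i‖ ^ 2) :=
        EuclideanSpace.norm_eq _
    _ ≤ Real.sqrt ((∑ i, ‖(T x : EuclideanSpace ℂ (Fin n)) i‖) ^ 2) :=
        Real.sqrt_le_sqrt (Finset.sum_sq_le_sq_sum_of_nonneg fun i _ => norm_nonneg _)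
    _ = ∑ i, ‖(T x : EuclideanSpace ℂ (Fin n)) i‖ :=
        Real.sqrt_sq (Finset.sum_nonneg fun i _ => norm_nonneg _)
    _ ≤ ∑ i, (∑ j, ‖B i j‖) * ‖x‖ := Finset.sum_le_sum fun i _ => hbound i
    _ = (∑ i, ∑ j, ‖B i j‖) * ‖x‖ := by rw [Finset.sum_mul]

lemma map_pow_comm (A : Matrix (Fin n) (Fin n) ℝ) (k : ℕ) :
    (A ^ k).map (algebraMap ℝ ℂ) = (A.map (algebraMap ℝ ℂ)) ^ k := by
  simpa [RingHom.mapMatrix_apply] using map_pow ((algebraMap ℝ ℂ).mapMatrix) A k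

lemma gelfand (A : Matrix (Fin n) (Fin n) ℝ) :
    Tendsto (fun k : ℕ => (‖(A ^ k).map (algebraMap ℝ ℂ)‖₊ : ℝ≥0∞) ^ (1/(k:ℝ)))
      atTop (𝓝 (specRad A)) := by
  have h := spectrum.pow_nnnorm_pow_one_div_tendsto_nhds_spectralRadius
    (A.map (algebraMap ℝ ℂ))
  have he : (fun k : ℕ => (‖(A ^ k).map (algebraMap ℝ ℂ)‖₊ : ℝ≥0∞) ^ (1/(k:ℝ)))
      = fun k : ℕ => (‖(A.map (algebraMap ℝ ℂ)) ^ k‖₊ : ℝ≥0∞) ^ (1/(k:ℝ)) := by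
    funext k
    rw [map_pow_comm]
  rw [he]
  exact h

lemma specRad_ne_top (A : Matrix (Fin n) (Fin n) ℝ) : specRad A ≠ ⊤ := by
  have h := spectrum.spectralRadius_le_pow_nnnorm_pow_one_div ℂ
    (A.map (algebraMap ℝ ℂ)) 0
  refine ne_top_of_le_ne_top ?_ h
  exact ENNReal.mul_ne_top
    (ENNReal.rpow_ne_top_of_nonneg (by norm_num) ENNReal.coe_ne_top)
    (ENNReal.rpow_ne_top_of_nonneg (by norm_num) ENNReal.coe_ne_top)

lemma gelfand_sub (A : Matrix (Fin n) (Fin n) ℝ) (p : ℕ) (hp : 1 ≤ p) :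
    Tendsto (fun l : ℕ => (‖(A ^ (p*l)).map (algebraMap ℝ ℂ)‖₊ : ℝ≥0∞) ^ (1/((p:ℝ)*(l:ℝ))))
      atTop (𝓝 (specRad A)) := by
  have hsub : Tendsto (fun l : ℕ => p * l) atTop atTop :=
    tendsto_atTop_mono (fun l => Nat.le_mul_of_pos_left l (by omega)) tendsto_id
  have h := (gelfand A).comp hsub
  convert h using 2 with l
  simp only [Function.comp_apply]
  norm_cast

lemma const_rpow_tendsto_one (c : ℝ≥0) (hc : c ≠ 0) (e : ℕ → ℝ)
    (he : Tendsto e atTop (𝓝 0)) :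
    Tendsto (fun k => (c : ℝ≥0∞) ^ (e k)) atTop (𝓝 1) := by
  have h : Tendsto (fun k => c ^ (e k)) atTop (𝓝 (c ^ (0:ℝ))) :=
    Filter.Tendsto.nnrpow tendsto_const_nhds he (Or.inl hc)
  rw [NNReal.rpow_zero] at h
  have := ENNReal.tendsto_coe.mpr h
  simpa [ENNReal.coe_rpow_of_ne_zero hc] using this

lemma tendsto_prod_ennreal {ι : Type*} (s : Finset ι) (f : ι → ℕ → ℝ≥0∞) (L : ι → ℝ≥0∞)
    (hL : ∀ i, L i ≠ ⊤) (h : ∀ i ∈ s, Tendsto (f i) atTop (𝓝 (L i))) :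
    Tendsto (fun k => ∏ i ∈ s, f i k) atTop (𝓝 (∏ i ∈ s, L i)) := by
  classical
  induction s using Finset.induction with
  | empty => simpa using tendsto_const_nhds
  | insert a s hx ih =>
      rw [Finset.prod_insert hx]
      have hprod : ∏ i ∈ s, L i ≠ ⊤ :=
        (ENNReal.prod_lt_top (fun i _ => lt_top_iff_ne_top.mpr (hL i))).ne
      have := ENNReal.Tendsto.mul (h a (Finset.mem_insert_self a s)) (Or.inr hprod)
        (ih fun i hi => h i (Finset.mem_insert_of_mem hi)) (Or.inr (hL a))
      convert this using 2 with k
      exact Finset.prod_insert hx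

lemma entry_norm_map {M : Matrix (Fin n) (Fin n) ℝ} (hM : ∀ i j, 0 ≤ M i j) (i j : Fin n) :
    ‖(M.map (algebraMap ℝ ℂ)) i j‖ = M i j := by
  rw [Matrix.map_apply]
  simp only [Complex.coe_algebraMap, Complex.norm_real]
  exact abs_of_nonneg (hM i j)

lemma entry_le_nnnorm_map {M : Matrix (Fin n) (Fin n) ℝ} (hM : ∀ i j, 0 ≤ M i j) (i j : Fin n) :
    M i j ≤ ((‖M.map (algebraMap ℝ ℂ)‖₊ : ℝ≥0) : ℝ) := by
  rw [coe_nnnorm, ← entry_norm_map hM i j]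
  exact entry_le_l2_opNorm _ i j

lemma nnnorm_map_le {M : Matrix (Fin n) (Fin n) ℝ} (hM : ∀ i j, 0 ≤ M i j) (b : ℝ≥0)
    (hb : ∀ i j, M i j ≤ (b : ℝ)) :
    ‖M.map (algebraMap ℝ ℂ)‖₊ ≤ ((n : ℝ≥0)^2 + 1) * b := by
  rw [← NNReal.coe_le_coe, coe_nnnorm]
  push_cast
  calc ‖M.map (algebraMap ℝ ℂ)‖ ≤ ∑ i, ∑ j, ‖(M.map (algebraMap ℝ ℂ)) i j‖ :=
        l2_opNorm_le_sum _
    _ = ∑ i : Fin n, ∑ j : Fin n, M i j :=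
        Finset.sum_congr rfl fun i _ => Finset.sum_congr rfl fun j _ => entry_norm_map hM i j
    _ ≤ ∑ _i : Fin n, ∑ _j : Fin n, (b : ℝ) :=
        Finset.sum_le_sum fun i _ => Finset.sum_le_sum fun j _ => hb i j
    _ = (n : ℝ)^2 * b := by
        simp [Finset.sum_const, Finset.card_univ]
        ring
    _ ≤ ((n : ℝ)^2 + 1) * b := by
        have : (0:ℝ) ≤ b := b.coe_nonneg
        nlinarith

end Helpers

theorem stmt15 {n m : ℕ} (K : Fin m → Matrix (Fin n) (Fin n) ℝ)
    (hK : ∀ t i j, 0 ≤ K t i j) (α : Fin m → ℝ) (hα : ∀ t, 0 < α t)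
    (hsum : ∑ t, α t = 1) (p : ℕ) (hp : 1 ≤ p) :
    specRad (Matrix.of fun i j => ∏ t, (K t i j) ^ (α t)) ≤
        (specRad (Matrix.of fun i j => ∏ t, ((K t ^ p) i j) ^ (α t))) ^ ((1:ℝ)/(p:ℝ)) ∧
      (specRad (Matrix.of fun i j => ∏ t, ((K t ^ p) i j) ^ (α t))) ^ ((1:ℝ)/(p:ℝ)) ≤
        ∏ t, (specRad (K t)) ^ (α t) := by
  set G : Matrix (Fin n) (Fin n) ℝ := Matrix.of fun i j => ∏ t, (K t i j) ^ (α t) with hGdef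
  set H : Matrix (Fin n) (Fin n) ℝ := Matrix.of fun i j => ∏ t, ((K t ^ p) i j) ^ (α t)
    with hHdef
  have hpR : (0:ℝ) < p := by exact_mod_cast hp
  set C : ℝ≥0 := (n : ℝ≥0)^2 + 1 with hCdef
  have hC : C ≠ 0 := by
    rw [hCdef]
    exact ne_of_gt (zero_lt_one.trans_le le_add_self)
  have hG0 : ∀ i j, 0 ≤ G i j := by
    intro i j
    rw [hGdef, Matrix.of_apply]
    exact Finset.prod_nonneg fun t _ => Real.rpow_nonneg (hK t i j) _
  have hKp0 : ∀ t i j, 0 ≤ (K t ^ p) i j := fun t => entry_pow_nonneg (hK t) p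
  have hH0 : ∀ i j, 0 ≤ H i j := by
    intro i j
    rw [hHdef, Matrix.of_apply]
    exact Finset.prod_nonneg fun t _ => Real.rpow_nonneg (hKp0 t i j) _
  have hGpH : ∀ i j, (G ^ p) i j ≤ H i j := fun i j =>
    geom_pow_le K hK α hα hsum p i j
  -- Part 1
  have part1 : specRad G ≤ (specRad H) ^ ((1:ℝ)/(p:ℝ)) := by
    have he : Tendsto (fun l : ℕ => 1/((p:ℝ)*(l:ℝ))) atTop (𝓝 0) := by
      have h0 := Filter.Tendsto.const_mul ((p:ℝ))⁻¹ tendsto_one_div_atTop_nhds_zero_nat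
      rw [mul_zero] at h0
      convert h0 using 2 with l
      rw [one_div, one_div, mul_inv]
    have hg1 : Tendsto (fun l : ℕ =>
        ((C : ℝ≥0∞) ^ (1/((p:ℝ)*(l:ℝ)))) *
          (((‖(H ^ l).map (algebraMap ℝ ℂ)‖₊ : ℝ≥0∞) ^ (1/(l:ℝ))) ^ ((1:ℝ)/(p:ℝ))))
        atTop (𝓝 (1 * (specRad H) ^ ((1:ℝ)/(p:ℝ)))) :=
      ENNReal.Tendsto.mul (const_rpow_tendsto_one C hC _ he) (Or.inl one_ne_zero)
        ((gelfand H).ennrpow_const _) (Or.inr ENNReal.one_ne_top)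
    have hle : ∀ l : ℕ, 1 ≤ l →
        (‖(G ^ (p*l)).map (algebraMap ℝ ℂ)‖₊ : ℝ≥0∞) ^ (1/((p:ℝ)*(l:ℝ))) ≤
        ((C : ℝ≥0∞) ^ (1/((p:ℝ)*(l:ℝ)))) *
          (((‖(H ^ l).map (algebraMap ℝ ℂ)‖₊ : ℝ≥0∞) ^ (1/(l:ℝ))) ^ ((1:ℝ)/(p:ℝ))) := by
      intro l hl
      have hlR : (0:ℝ) < l := by exact_mod_cast hl
      have hb : ∀ i j, (G ^ (p*l)) i j ≤ ((‖(H ^ l).map (algebraMap ℝ ℂ)‖₊ : ℝ≥0) : ℝ) := by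
        intro i j
        rw [pow_mul]
        exact le_trans (entry_pow_mono (entry_pow_nonneg hG0 p) hGpH l i j)
          (entry_le_nnnorm_map (entry_pow_nonneg hH0 l) i j)
      have hnn := nnnorm_map_le (entry_pow_nonneg hG0 (p*l)) _ hb
      calc (‖(G ^ (p*l)).map (algebraMap ℝ ℂ)‖₊ : ℝ≥0∞) ^ (1/((p:ℝ)*(l:ℝ)))
          ≤ ((C * ‖(H ^ l).map (algebraMap ℝ ℂ)‖₊ : ℝ≥0) : ℝ≥0∞) ^ (1/((p:ℝ)*(l:ℝ))) :=
            ENNReal.rpow_le_rpow (ENNReal.coe_le_coe.mpr hnn) (by positivity)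
        _ = ((C : ℝ≥0∞) ^ (1/((p:ℝ)*(l:ℝ)))) *
              ((‖(H ^ l).map (algebraMap ℝ ℂ)‖₊ : ℝ≥0∞) ^ (1/((p:ℝ)*(l:ℝ)))) := by
            rw [ENNReal.coe_mul, ENNReal.mul_rpow_of_nonneg _ _ (by positivity)]
        _ = ((C : ℝ≥0∞) ^ (1/((p:ℝ)*(l:ℝ)))) *
              (((‖(H ^ l).map (algebraMap ℝ ℂ)‖₊ : ℝ≥0∞) ^ (1/(l:ℝ))) ^ ((1:ℝ)/(p:ℝ))) := by
            congr 1
            rw [← ENNReal.rpow_mul]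
            congr 1
            field_simp
    have h1 := le_of_tendsto_of_tendsto (gelfand_sub G p hp) hg1
      (Filter.eventually_atTop.mpr ⟨1, hle⟩)
    rwa [one_mul] at h1
  -- Part 2
  have part2 : (specRad H) ^ ((1:ℝ)/(p:ℝ)) ≤ ∏ t, (specRad (K t)) ^ (α t) := by
    have hbig : specRad H ≤ ∏ t, (specRad (K t)) ^ ((p:ℝ) * α t) := by
      have he : Tendsto (fun l : ℕ => 1/((l:ℝ))) atTop (𝓝 0) :=
        tendsto_one_div_atTop_nhds_zero_nat
      have hg2 : Tendsto (fun l : ℕ =>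
          ((C : ℝ≥0∞) ^ (1/(l:ℝ))) *
            ∏ t, (((‖((K t) ^ (p*l)).map (algebraMap ℝ ℂ)‖₊ : ℝ≥0∞))
              ^ (1/((p:ℝ)*(l:ℝ)))) ^ ((p:ℝ) * α t))
          atTop (𝓝 (1 * ∏ t, (specRad (K t)) ^ ((p:ℝ) * α t))) := by
        refine ENNReal.Tendsto.mul (const_rpow_tendsto_one C hC _ he) (Or.inl one_ne_zero)
          ?_ (Or.inr ENNReal.one_ne_top)
        exact tendsto_prod_ennreal Finset.univ _ _
          (fun t => ENNReal.rpow_ne_top_of_nonneg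
            (mul_nonneg (Nat.cast_nonneg p) (hα t).le) (specRad_ne_top (K t)))
          (fun t _ => (gelfand_sub (K t) p hp).ennrpow_const _)
      have hle : ∀ l : ℕ, 1 ≤ l →
          (‖(H ^ l).map (algebraMap ℝ ℂ)‖₊ : ℝ≥0∞) ^ (1/(l:ℝ)) ≤
          ((C : ℝ≥0∞) ^ (1/(l:ℝ))) *
            ∏ t, (((‖((K t) ^ (p*l)).map (algebraMap ℝ ℂ)‖₊ : ℝ≥0∞))
              ^ (1/((p:ℝ)*(l:ℝ)))) ^ ((p:ℝ) * α t) := by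
        intro l hl
        have hlR : (0:ℝ) < l := by exact_mod_cast hl
        set b : ℝ≥0 := ∏ t, ‖((K t) ^ (p*l)).map (algebraMap ℝ ℂ)‖₊ ^ (α t) with hbdef
        have hb : ∀ i j, (H ^ l) i j ≤ (b : ℝ) := by
          intro i j
          have h1 := geom_pow_le (fun t => K t ^ p) hKp0 α hα hsum l i j
          have h2 : ∀ t : Fin m, ((K t ^ p) ^ l) i j = ((K t) ^ (p*l)) i j := by
            intro t
            rw [← pow_mul]
          calc (H ^ l) i j ≤ ∏ t, (((K t ^ p) ^ l) i j) ^ (α t) := h1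
            _ = ∏ t, (((K t) ^ (p*l)) i j) ^ (α t) :=
                Finset.prod_congr rfl fun t _ => by rw [h2 t]
            _ ≤ ∏ t, ((‖((K t) ^ (p*l)).map (algebraMap ℝ ℂ)‖₊ : ℝ≥0) : ℝ) ^ (α t) := by
                refine Finset.prod_le_prod
                  (fun t _ => Real.rpow_nonneg (entry_pow_nonneg (hK t) (p*l) i j) _)
                  (fun t _ => Real.rpow_le_rpow (entry_pow_nonneg (hK t) (p*l) i j)
                    (entry_le_nnnorm_map (entry_pow_nonneg (hK t) (p*l)) i j) (hα t).le)
            _ = (b : ℝ) := by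
                rw [hbdef]
                push_cast
                rfl
        have hnn := nnnorm_map_le (entry_pow_nonneg hH0 l) b hb
        calc (‖(H ^ l).map (algebraMap ℝ ℂ)‖₊ : ℝ≥0∞) ^ (1/(l:ℝ))
            ≤ ((C * b : ℝ≥0) : ℝ≥0∞) ^ (1/(l:ℝ)) :=
              ENNReal.rpow_le_rpow (ENNReal.coe_le_coe.mpr hnn) (by positivity)
          _ = ((C : ℝ≥0∞) ^ (1/(l:ℝ))) * ((b : ℝ≥0∞) ^ (1/(l:ℝ))) := by
              rw [ENNReal.coe_mul, ENNReal.mul_rpow_of_nonneg _ _ (by positivity)]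
          _ = ((C : ℝ≥0∞) ^ (1/(l:ℝ))) *
                ∏ t, (((‖((K t) ^ (p*l)).map (algebraMap ℝ ℂ)‖₊ : ℝ≥0∞))
                  ^ (1/((p:ℝ)*(l:ℝ)))) ^ ((p:ℝ) * α t) := by
              congr 1
              have hb2 : (b : ℝ≥0∞)
                  = ∏ t, (‖((K t) ^ (p*l)).map (algebraMap ℝ ℂ)‖₊ : ℝ≥0∞) ^ (α t) := by
                rw [hbdef]
                push_cast [ENNReal.coe_rpow_of_nonneg _ (le_of_lt (hα _))]
                rfl
              rw [hb2, ← ENNReal.prod_rpow_of_nonneg (by positivity : (0:ℝ) ≤ 1/(l:ℝ))]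
              refine Finset.prod_congr rfl fun t _ => ?_
              rw [← ENNReal.rpow_mul, ← ENNReal.rpow_mul]
              congr 1
              field_simp
      have h1 := le_of_tendsto_of_tendsto (gelfand H) hg2
        (Filter.eventually_atTop.mpr ⟨1, hle⟩)
      rwa [one_mul] at h1
    calc (specRad H) ^ ((1:ℝ)/(p:ℝ))
        ≤ (∏ t, (specRad (K t)) ^ ((p:ℝ) * α t)) ^ ((1:ℝ)/(p:ℝ)) :=
          ENNReal.rpow_le_rpow hbig (by positivity)
      _ = ∏ t, (specRad (K t)) ^ (α t) := by
          rw [← ENNReal.prod_rpow_of_nonneg (by positivity : (0:ℝ) ≤ (1:ℝ)/(p:ℝ))]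
          refine Finset.prod_congr rfl fun t _ => ?_
          rw [← ENNReal.rpow_mul]
          congr 1
          field_simp
  exact ⟨part1, part2⟩
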